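/- Let N ≥ 3, S(λ₁) > 0, ν > 0, α ≥ 2, β > 1, h bounded with ‖h‖_∞ =: H, and let σ₁, σ₂ > 0 satisfy σ₁ + σ₂ < S(λ₂)^{N/2} and S(λ₁) σ₁^{(N-2)/N} ≤ σ₁ + ν α H (S(λ₂))^{β(N-2)/4} σ₁^{(α/2)(N-2)/N}. Then for every ε > 0 there exists ν̃ > 0 such that if 0 < ν < ν̃ then σ₁ > (1-ε) S(λ₁)^{N/2}. -/

import Mathlib

set_option maxHeartbeats 1000000


/-- `Sl1 = S(λ₁)`, `Sl2 = S(λ₂)`, `H = ‖h‖_∞`, `σ1 = ∫ũ^{2*}`, `σ2 = ∫ṽ^{2*}`. -/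
theorem stmt_17 (N : ℕ) (hN : 3 ≤ N) (Sl1 Sl2 α β H : ℝ)
    (hS1 : 0 < Sl1) (hS2 : 0 < Sl2) (hα : 2 ≤ α) (hβ : 1 < β) (hH : 0 < H) :
    ∀ ε > (0 : ℝ), ∃ ν' > (0 : ℝ), ∀ ν σ1 σ2 : ℝ, 0 < ν → ν < ν' →
      0 < σ1 → 0 < σ2 →
      σ1 + σ2 < Sl2 ^ ((N : ℝ) / 2) →
      Sl1 * σ1 ^ (((N : ℝ) - 2) / (N : ℝ))
        ≤ σ1 + ν * α * H * Sl2 ^ (β * ((N : ℝ) - 2) / 4)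
            * σ1 ^ ((α / 2) * (((N : ℝ) - 2) / (N : ℝ))) →
      σ1 > (1 - ε) * Sl1 ^ ((N : ℝ) / 2) := by
  intro ε hε
  have hN3 : (3 : ℝ) ≤ (N : ℝ) := by exact_mod_cast hN
  have hNpos : (0 : ℝ) < (N : ℝ) := by linarith
  have hNne : (N : ℝ) ≠ 0 := ne_of_gt hNpos
  set θ : ℝ := ((N : ℝ) - 2) / (N : ℝ) with hθ
  have hθpos : 0 < θ := div_pos (by linarith) hNpos
  -- constants
  set K : ℝ := max 1 (Sl2 ^ ((N : ℝ) / 2)) with hK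
  have hKpos : 0 < K := lt_of_lt_of_le one_pos (le_max_left _ _)
  set C : ℝ := α * H * Sl2 ^ (β * ((N : ℝ) - 2) / 4) * K ^ ((α / 2 - 1) * θ) with hC
  have hCpos : 0 < C := by
    have h1 : 0 < Sl2 ^ (β * ((N : ℝ) - 2) / 4) := Real.rpow_pos_of_pos hS2 _
    have h2 : 0 < K ^ ((α / 2 - 1) * θ) := Real.rpow_pos_of_pos hKpos _
    have : (0:ℝ) < α := by linarith
    positivity
  by_cases hε1 : ε < 1
  · -- main case
    have h1ε : 0 < 1 - ε := by linarith
    set c : ℝ := (1 - ε) ^ ((2 : ℝ) / (N : ℝ)) with hc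
    have hcpos : 0 < c := Real.rpow_pos_of_pos h1ε _
    have hclt : c < 1 := Real.rpow_lt_one (le_of_lt h1ε) (by linarith) (div_pos two_pos hNpos)
    refine ⟨Sl1 * (1 - c) / C, div_pos (mul_pos hS1 (by linarith)) hCpos, ?_⟩
    intro ν σ1 σ2 hν hνlt hσ1 hσ2 hsum hineq
    have hσ1le : σ1 ≤ K := le_trans (by linarith) (le_max_right _ _)
    -- bound the perturbation term
    have hsplit : σ1 ^ ((α / 2) * θ) = σ1 ^ θ * σ1 ^ ((α / 2 - 1) * θ) := by
      rw [← Real.rpow_add hσ1]; ring_nf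
    have hbound : σ1 ^ ((α / 2 - 1) * θ) ≤ K ^ ((α / 2 - 1) * θ) :=
      Real.rpow_le_rpow (le_of_lt hσ1) hσ1le (by nlinarith [hθpos.le])
    have hθrpos : 0 < σ1 ^ θ := Real.rpow_pos_of_pos hσ1 _
    have hterm : ν * α * H * Sl2 ^ (β * ((N : ℝ) - 2) / 4) * σ1 ^ ((α / 2) * θ)
        ≤ ν * C * σ1 ^ θ := by
      rw [hsplit, hC]
      have h1 : 0 < Sl2 ^ (β * ((N : ℝ) - 2) / 4) := Real.rpow_pos_of_pos hS2 _
      have hA : (0:ℝ) < α := by linarith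
      nlinarith [mul_le_mul_of_nonneg_left hbound
        (by positivity : (0:ℝ) ≤ ν * α * H * Sl2 ^ (β * ((N : ℝ) - 2) / 4) * σ1 ^ θ)]
    have hmain : (Sl1 - ν * C) * σ1 ^ θ ≤ σ1 := by nlinarith
    -- σ1 = σ1^(2/N) * σ1^θ
    have hσeq : σ1 ^ ((2 : ℝ) / (N : ℝ)) * σ1 ^ θ = σ1 := by
      rw [← Real.rpow_add hσ1]
      have : (2 : ℝ) / (N : ℝ) + θ = 1 := by rw [hθ]; field_simp; ring
      rw [this, Real.rpow_one]
    have hdiv : Sl1 - ν * C ≤ σ1 ^ ((2 : ℝ) / (N : ℝ)) := by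
      have h2 : (Sl1 - ν * C) * σ1 ^ θ ≤ σ1 ^ ((2 : ℝ) / (N : ℝ)) * σ1 ^ θ := by
        rw [hσeq]; exact hmain
      exact le_of_mul_le_mul_right h2 hθrpos
    have hνC : ν * C < Sl1 * (1 - c) :=
      calc ν * C < Sl1 * (1 - c) / C * C := mul_lt_mul_of_pos_right hνlt hCpos
        _ = Sl1 * (1 - c) := by field_simp
    have hgt : c * Sl1 < σ1 ^ ((2 : ℝ) / (N : ℝ)) := by
      have e : c * Sl1 = Sl1 - Sl1 * (1 - c) := by ring
      linarith
    -- raise to power N/2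
    have hfinal : (c * Sl1) ^ ((N : ℝ) / 2) < (σ1 ^ ((2 : ℝ) / (N : ℝ))) ^ ((N : ℝ) / 2) :=
      Real.rpow_lt_rpow (by positivity) hgt (by positivity)
    have hL : (σ1 ^ ((2 : ℝ) / (N : ℝ))) ^ ((N : ℝ) / 2) = σ1 := by
      rw [← Real.rpow_mul (le_of_lt hσ1)]
      have h : (2 : ℝ) / (N : ℝ) * ((N : ℝ) / 2) = 1 := by field_simp
      rw [h, Real.rpow_one]
    have hR : (c * Sl1) ^ ((N : ℝ) / 2) = (1 - ε) * Sl1 ^ ((N : ℝ) / 2) := by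
      rw [Real.mul_rpow (le_of_lt hcpos) (le_of_lt hS1), hc,
        ← Real.rpow_mul (le_of_lt h1ε)]
      have h : (2 : ℝ) / (N : ℝ) * ((N : ℝ) / 2) = 1 := by field_simp
      rw [h, Real.rpow_one]
    rw [hL, hR] at hfinal
    exact hfinal
  · -- ε ≥ 1 : trivial
    refine ⟨1, one_pos, ?_⟩
    intro ν σ1 σ2 hν hνlt hσ1 hσ2 hsum hineq
    have : (1 - ε) * Sl1 ^ ((N : ℝ) / 2) ≤ 0 := by
      have h1 : 0 < Sl1 ^ ((N : ℝ) / 2) := Real.rpow_pos_of_pos hS1 _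
      nlinarith [h1]
    linarith
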